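/- Let d ≥ 2 be an integer and α ∈ (0,2), and let Π = {y ∈ ℝ^d : y₁ ≤ 1} be a half-space. Then for every x = (r,0,…,0) with r < 1, ∫_{{y ∈ ℝ^d : x−y ∉ Π}} |y|^{−d−α} dy = σ_{d−1} α^{−1} (∫_0^∞ ρ^{d−2}(1+ρ²)^{−(d+α)/2} dρ) · (1−r)^{−α}; equivalently, the fractional Laplacian of the indicator function of Π evaluated at x equals C_{α,d}(1−r)^{−α} with C_{α,d} = 𝒜 σ_{d−1} α^{−1} ∫_0^∞ ρ^{d−2}(1+ρ²)^{−(d+α)/2} dρ. -/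

import Mathlib

open MeasureTheory Real

/-- The area `σ_d = 2π^{d/2}/Γ(d/2)` of the unit sphere in `ℝ^d`. -/
noncomputable def sigmaConst (d : ℕ) : ℝ := 2 * π ^ ((d : ℝ) / 2) / Gamma ((d : ℝ) / 2)

/-- The normalizing constant `𝒜(d,α)` of the fractional Laplacian. -/
noncomputable def fracLapConst (d : ℕ) (α : ℝ) : ℝ :=
  2 ^ α * Gamma (((d : ℝ) + α) / 2) / (π ^ ((d : ℝ) / 2) * |Gamma (-α / 2)|)

open Set

lemma sigma_eq (n : ℕ) (hn : 1 ≤ n) :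
    (n : ℝ) * (volume (Metric.ball (0 : EuclideanSpace ℝ (Fin n)) 1)).toReal = sigmaConst n := by
  haveI : Nonempty (Fin n) := ⟨⟨0, hn⟩⟩
  rw [EuclideanSpace.volume_ball]
  have hn' : (0:ℝ) < (n:ℝ)/2 := by positivity
  have hG : 0 < Gamma ((n:ℝ)/2) := Real.Gamma_pos_of_pos hn'
  have h1 : Real.Gamma ((n:ℝ)/2 + 1) = ((n:ℝ)/2) * Gamma ((n:ℝ)/2) := Real.Gamma_add_one hn'.ne'
  have h2 : (Real.sqrt π) ^ (Fintype.card (Fin n)) = π ^ ((n:ℝ)/2) := by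
    rw [Fintype.card_fin, Real.sqrt_eq_rpow, ← Real.rpow_natCast (π ^ ((1:ℝ)/2)) n,
      ← Real.rpow_mul pi_pos.le]
    ring_nf
  rw [ENNReal.toReal_mul, ENNReal.toReal_pow, ENNReal.toReal_ofReal zero_le_one, one_pow, one_mul,
    ENNReal.toReal_ofReal (by positivity), Fintype.card_fin, h1]
  rw [Fintype.card_fin] at h2
  rw [h2, sigmaConst]
  have hπ : (0:ℝ) < π ^ ((n:ℝ)/2) := rpow_pos_of_pos pi_pos _
  field_simp

lemma aux_outer (s α : ℝ) (hs : 0 < s) (hα : 0 < α) :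
    ∫ t in Iio (-s), |t| ^ (-1 - α) = s ^ (-α) / α := by
  have h := integral_comp_neg_Ioi s (fun t => |t| ^ (-1 - α))
  rw [← integral_Iic_eq_integral_Iio, ← h]
  rw [setIntegral_congr_fun measurableSet_Ioi
    (fun u (hu : u ∈ Ioi s) => by
      rw [abs_neg, abs_of_pos (hs.trans hu)] : ∀ u ∈ Ioi s, |(-u)| ^ (-1-α) = u ^ (-1-α))]
  rw [integral_Ioi_rpow_of_lt (by linarith) hs]
  have : -1 - α + 1 = -α := by ring
  rw [this]
  field_simp

lemma aux_subst (n : ℕ) (hn : 1 ≤ n) (p t : ℝ) (ht : t ≠ 0) :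
    ∫ y in Ioi (0:ℝ), y ^ (n - 1 : ℕ) * (t ^ 2 + y ^ 2) ^ (-p / 2)
      = |t| ^ ((n : ℝ) - p) *
        ∫ ρ in Ioi (0:ℝ), ρ ^ ((n : ℝ) - 1) * (1 + ρ ^ 2) ^ (-p / 2) := by
  have habs : 0 < |t| := abs_pos.mpr ht
  have h := integral_comp_mul_left_Ioi
    (fun y => y ^ (n - 1 : ℕ) * (t ^ 2 + y ^ 2) ^ (-p / 2)) 0 habs
  rw [mul_zero] at h
  have h2 : ∀ ρ ∈ Ioi (0:ℝ), (|t| * ρ) ^ (n - 1 : ℕ) * (t ^ 2 + (|t| * ρ) ^ 2) ^ (-p / 2)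
      = (|t| ^ ((n:ℝ) - 1) * |t| ^ (-p)) * (ρ ^ ((n:ℝ) - 1) * (1 + ρ ^ 2) ^ (-p / 2)) := by
    intro ρ hρ
    have hρ0 : (0:ℝ) < ρ := hρ
    have e1 : (t ^ 2 + (|t| * ρ) ^ 2) = t ^ 2 * (1 + ρ ^ 2) := by
      rw [mul_pow, sq_abs]; ring
    rw [e1, Real.mul_rpow (by positivity) (by positivity), mul_pow]
    have e2 : (t ^ 2 : ℝ) ^ (-p / 2) = |t| ^ (-p) := by
      rw [← sq_abs, ← Real.rpow_natCast |t| 2, ← Real.rpow_mul habs.le]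
      congr 1; push_cast; ring
    have e3 : ∀ a : ℝ, 0 < a → (a : ℝ) ^ (n - 1 : ℕ) = a ^ ((n:ℝ) - 1) := by
      intro a ha
      rw [← Real.rpow_natCast a (n-1), Nat.cast_sub hn, Nat.cast_one]
    rw [e2, e3 _ habs, e3 _ hρ0]
    ring
  rw [setIntegral_congr_fun measurableSet_Ioi h2, MeasureTheory.integral_const_mul] at h
  have h3 : ∫ y in Ioi (0:ℝ), y ^ (n - 1 : ℕ) * (t ^ 2 + y ^ 2) ^ (-p / 2)
      = |t| * ((|t| ^ ((n:ℝ)-1) * |t| ^ (-p)) *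
          ∫ ρ in Ioi (0:ℝ), ρ ^ ((n:ℝ)-1) * (1 + ρ ^ 2) ^ (-p / 2)) := by
    rw [h, smul_eq_mul, ← mul_assoc, mul_inv_cancel₀ habs.ne', one_mul]
  rw [h3, ← mul_assoc]
  congr 1
  rw [show |t| * (|t| ^ ((n:ℝ)-1) * |t| ^ (-p))
      = |t| ^ (1:ℝ) * (|t| ^ ((n:ℝ)-1) * |t| ^ (-p)) from by rw [Real.rpow_one],
    ← Real.rpow_add habs, ← Real.rpow_add habs]
  congr 1; ring

lemma aux_inner (n : ℕ) (hn : 1 ≤ n) (p t : ℝ) (ht : t ≠ 0) :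
    ∫ z : EuclideanSpace ℝ (Fin n), (t ^ 2 + ‖z‖ ^ 2) ^ (-p / 2)
      = sigmaConst n * |t| ^ ((n : ℝ) - p) *
        ∫ ρ in Ioi (0:ℝ), ρ ^ ((n : ℝ) - 1) * (1 + ρ ^ 2) ^ (-p / 2) := by
  haveI : Nonempty (Fin n) := ⟨⟨0, hn⟩⟩
  haveI : Nontrivial (EuclideanSpace ℝ (Fin n)) := by
    apply nontrivial_of_ne 0 (EuclideanSpace.single ⟨0, hn⟩ (1:ℝ))
    intro h
    have := congrFun (congrArg WithLp.ofLp h.symm) ⟨0, hn⟩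
    simp [EuclideanSpace.single_apply] at this
  have key := integral_fun_norm_addHaar (volume : Measure (EuclideanSpace ℝ (Fin n)))
    (fun u => (t ^ 2 + u ^ 2) ^ (-p / 2))
  simp only [finrank_euclideanSpace_fin, smul_eq_mul, nsmul_eq_mul] at key
  rw [key, aux_subst n hn p t ht, ← mul_assoc, ← mul_assoc]
  congr 2
  exact sigma_eq n hn

lemma integrableOn_norm_rpow (n : ℕ) (p s : ℝ) (hp : (n : ℝ) < p) (hs : 0 < s) :
    IntegrableOn (fun y : EuclideanSpace ℝ (Fin n) => ‖y‖ ^ (-p)) {y | s ≤ ‖y‖} := by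
  have hp0 : 0 < p := lt_of_le_of_lt (Nat.cast_nonneg n) hp
  have hdim : (Module.finrank ℝ (EuclideanSpace ℝ (Fin n)) : ℝ) < p := by
    rwa [finrank_euclideanSpace_fin]
  have hg : Integrable (fun y : EuclideanSpace ℝ (Fin n) =>
      (1 + s⁻¹) ^ p * (1 + ‖y‖) ^ (-p)) volume :=
    (integrable_one_add_norm hdim).const_mul _
  have hmeas : MeasurableSet {y : EuclideanSpace ℝ (Fin n) | s ≤ ‖y‖} :=
    (isClosed_le continuous_const continuous_norm).measurableSet
  refine (hg.restrict (s := {y | s ≤ ‖y‖})).mono' ?_ ?_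
  · exact (measurable_norm.pow_const _).aestronglyMeasurable
  · filter_upwards [ae_restrict_mem hmeas] with y hy
    have hy' : s ≤ ‖y‖ := hy
    have hy0 : 0 < ‖y‖ := lt_of_lt_of_le hs hy'
    rw [Real.norm_eq_abs, abs_of_nonneg (Real.rpow_nonneg (norm_nonneg y) _)]
    rw [Real.rpow_neg (norm_nonneg y), Real.rpow_neg (by positivity),
      ← Real.inv_rpow (norm_nonneg y), ← Real.inv_rpow (by positivity)]
    rw [← Real.mul_rpow (by positivity) (by positivity)]
    apply Real.rpow_le_rpow (by positivity) ?_ hp0.le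
    rw [inv_le_iff_one_le_mul₀ hy0]
    have h2 : (0:ℝ) < 1 + ‖y‖ := by linarith
    have h5 : (1:ℝ) ≤ s⁻¹ * ‖y‖ := by
      rw [← inv_mul_cancel₀ hs.ne']; gcongr
    calc (1:ℝ) = (1 + ‖y‖) * (1 + ‖y‖)⁻¹ := by field_simp
      _ ≤ ((1 + s⁻¹) * ‖y‖) * (1 + ‖y‖)⁻¹ := by gcongr; nlinarith
      _ = (1 + s⁻¹) * (1 + ‖y‖)⁻¹ * ‖y‖ := by ring

/-- The key integral identity. -/
lemma key_integral (n : ℕ) (hn : 1 ≤ n) (α : ℝ) (hα : α ∈ Set.Ioo (0:ℝ) 2)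
    (r : ℝ) (hr : r < 1) :
    (∫ y in {y : EuclideanSpace ℝ (Fin (n+1)) | y (⟨0, n.succ_pos⟩ : Fin (n+1)) < r - 1},
        ‖y‖ ^ (-((n:ℝ)+1) - α))
      = sigmaConst n * α⁻¹ *
          (∫ ρ in Set.Ioi (0:ℝ), ρ ^ ((n : ℝ) - 1) * (1 + ρ ^ 2) ^ (-(((n:ℝ)+1) + α) / 2)) *
          (1 - r) ^ (-α) := by
  obtain ⟨hα0, hα2⟩ := hα
  set p : ℝ := (n : ℝ) + 1 + α with hp
  have hs : (0:ℝ) < 1 - r := by linarith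
  have hexp : -((n:ℝ)+1) - α = -p := by rw [hp]; ring
  rw [hexp]
  set i0 : Fin (n+1) := ⟨0, n.succ_pos⟩ with hi0
  set S : Set (EuclideanSpace ℝ (Fin (n+1))) := {y | y i0 < r - 1} with hS
  -- coordinate bound and integrability
  have hcoord_le : ∀ y : EuclideanSpace ℝ (Fin (n+1)), |y i0| ≤ ‖y‖ := by
    intro y
    rw [EuclideanSpace.norm_eq, ← Real.sqrt_sq_eq_abs]
    apply Real.sqrt_le_sqrt
    have := Finset.single_le_sum (f := fun i => ‖y i‖ ^ 2)
      (fun i _ => sq_nonneg _) (Finset.mem_univ i0)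
    simpa [Real.norm_eq_abs, sq_abs] using this
  have hsub : S ⊆ {y | (1 - r) ≤ ‖y‖} := by
    intro y hy
    have h1 : y i0 < r - 1 := hy
    have : (1 - r) ≤ |y i0| := by
      rw [abs_of_neg (by linarith)]; linarith
    exact this.trans (hcoord_le y)
  have hmeasS : MeasurableSet S := by
    have : Measurable fun y : EuclideanSpace ℝ (Fin (n+1)) => y i0 :=
      (continuous_apply i0).measurable.comp (MeasurableEquiv.toLp 2 (Fin (n+1) → ℝ)).symm.measurable
    exact measurableSet_lt this measurable_const
  have hInt : IntegrableOn (fun y : EuclideanSpace ℝ (Fin (n+1)) => ‖y‖ ^ (-p)) S :=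
    (integrableOn_norm_rpow (n+1) p (1-r) (by rw [hp]; push_cast; linarith) hs).mono_set hsub
  -- the measure preserving map
  set E1 := (MeasurableEquiv.toLp 2 (Fin (n+1) → ℝ)).symm with hE1
  set E2 := MeasurableEquiv.piFinSuccAbove (fun _ : Fin (n+1) => ℝ) 0 with hE2
  set E1n := (MeasurableEquiv.toLp 2 (Fin n → ℝ)).symm with hE1n
  set g : ℝ × (Fin n → ℝ) → EuclideanSpace ℝ (Fin (n+1)) :=
    fun w => E1.symm (E2.symm w) with hg
  have hgMP : MeasurePreserving g (volume.prod volume) volume :=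
    ((EuclideanSpace.volume_preserving_symm_measurableEquiv_toLp (Fin (n+1))).symm).comp
      ((volume_preserving_piFinSuccAbove (fun _ : Fin (n+1) => ℝ) 0).symm)
  have hgEmb : MeasurableEmbedding g :=
    (MeasurableEquiv.measurableEmbedding E1.symm).comp
      (MeasurableEquiv.measurableEmbedding E2.symm)
  have hcoord : ∀ w : ℝ × (Fin n → ℝ), g w i0 = w.1 := by
    intro w
    show ((E2.symm w : Fin (n+1) → ℝ)) i0 = w.1
    rw [hE2, MeasurableEquiv.piFinSuccAbove_symm_apply]
    exact Fin.insertNth_apply_same (α := fun _ : Fin (n+1) => ℝ) 0 w.1 w.2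
  have hpre : g ⁻¹' S = Iio (r-1) ×ˢ (univ : Set (Fin n → ℝ)) := by
    ext w
    simp only [Set.mem_preimage, hS, Set.mem_setOf_eq, Set.mem_prod, Set.mem_univ, and_true,
      Set.mem_Iio, hcoord w]
  have hnormsq : ∀ w : ℝ × (Fin n → ℝ), ‖g w‖ ^ 2 = w.1 ^ 2 + ‖E1n.symm w.2‖ ^ 2 := by
    intro w
    have h1 : ‖g w‖ ^ 2 = ∑ i, ((E2.symm w : Fin (n+1) → ℝ) i) ^ 2 := by
      rw [show ‖g w‖ = √(∑ i, ‖(E2.symm w : Fin (n+1) → ℝ) i‖ ^ 2) from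
        EuclideanSpace.norm_eq _, Real.sq_sqrt (by positivity)]
      simp [Real.norm_eq_abs, sq_abs]
    have h2 : ‖E1n.symm w.2‖ ^ 2 = ∑ j, (w.2 j) ^ 2 := by
      rw [show ‖(E1n.symm w.2 : EuclideanSpace ℝ (Fin n))‖
          = √(∑ j, ‖w.2 j‖ ^ 2) from EuclideanSpace.norm_eq _,
        Real.sq_sqrt (by positivity)]
      simp [Real.norm_eq_abs, sq_abs]
    rw [h1, h2]
    rw [Fin.sum_univ_succAbove (fun i => ((E2.symm w : Fin (n+1) → ℝ) i) ^ 2) 0]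
    simp [hE2, MeasurableEquiv.piFinSuccAbove_symm_apply]
  have hfg : ∀ w : ℝ × (Fin n → ℝ),
      ‖g w‖ ^ (-p) = (w.1 ^ 2 + ‖E1n.symm w.2‖ ^ 2) ^ (-p/2) := by
    intro w
    rw [← hnormsq w, ← Real.rpow_natCast ‖g w‖ 2, ← Real.rpow_mul (norm_nonneg _)]
    congr 1
    push_cast; ring
  -- transport the integral
  have step1 : (∫ y in S, ‖y‖ ^ (-p)) =
      ∫ w in Iio (r-1) ×ˢ (univ : Set (Fin n → ℝ)),
        (w.1 ^ 2 + ‖E1n.symm w.2‖ ^ 2) ^ (-p/2) ∂(volume.prod volume) := by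
    rw [← hgMP.setIntegral_preimage_emb hgEmb (fun y => ‖y‖ ^ (-p)) S, hpre]
    exact setIntegral_congr_fun ((measurableSet_Iio).prod MeasurableSet.univ)
      (fun w _ => hfg w)
  -- integrability on the product
  have hIntProd : IntegrableOn
      (fun w : ℝ × (Fin n → ℝ) => (w.1 ^ 2 + ‖E1n.symm w.2‖ ^ 2) ^ (-p/2))
      (Iio (r-1) ×ˢ (univ : Set (Fin n → ℝ))) (volume.prod volume) := by
    rw [← hpre]
    have := (hgMP.restrict_preimage_emb hgEmb S).integrable_comp_emb hgEmb
      (g := fun y : EuclideanSpace ℝ (Fin (n+1)) => ‖y‖ ^ (-p))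
    have h3 : IntegrableOn (fun w => ‖g w‖ ^ (-p)) (g ⁻¹' S) (volume.prod volume) :=
      this.mpr hInt
    exact h3.congr_fun (fun w _ => hfg w) (hgEmb.measurable hmeasS)
  rw [step1, setIntegral_prod _ hIntProd]
  -- inner integral
  have hinner : ∀ t ∈ Iio (r-1),
      (∫ z in (univ : Set (Fin n → ℝ)), ((t,z).1 ^ 2 + ‖E1n.symm (t,z).2‖ ^ 2) ^ (-p/2))
        = (sigmaConst n *
            ∫ ρ in Ioi (0:ℝ), ρ ^ ((n : ℝ) - 1) * (1 + ρ ^ 2) ^ (-p / 2)) * |t| ^ (-1-α) := by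
    intro t ht
    rw [Measure.restrict_univ]
    show (∫ z : Fin n → ℝ, (t ^ 2 + ‖E1n.symm z‖ ^ 2) ^ (-p/2)) = _
    have ht0 : t ≠ 0 := by
      have : t < r - 1 := ht; intro h; rw [h] at this; linarith
    have htrans := ((EuclideanSpace.volume_preserving_symm_measurableEquiv_toLp (Fin n)).symm).integral_comp
      (MeasurableEquiv.measurableEmbedding E1n.symm)
      (fun z : EuclideanSpace ℝ (Fin n) => (t ^ 2 + ‖z‖ ^ 2) ^ (-p/2))
    rw [htrans, aux_inner n hn p t ht0]
    have : (n:ℝ) - p = -1 - α := by rw [hp]; ring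
    rw [this]; ring
  rw [setIntegral_congr_fun measurableSet_Iio hinner, MeasureTheory.integral_const_mul,
    show r - 1 = -(1-r) by ring, aux_outer (1-r) α hs hα0]
  rw [hp]
  have : -((n:ℝ) + 1 + α) = -(((n:ℝ)+1) + α) := by ring
  rw [this]
  ring


/-- Fractional Laplacian of the indicator of the half-space `Π = {y : y₁ ≤ 1}`,
evaluated at `x = r e₁` with `r < 1`. -/
theorem fracLap_halfspace (d : ℕ) (hd : 2 ≤ d) (α : ℝ) (hα : α ∈ Set.Ioo (0:ℝ) 2)
    (r : ℝ) (hr : r < 1)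
    (x : EuclideanSpace ℝ (Fin d))
    (hx : x = r • EuclideanSpace.single (⟨0, by omega⟩ : Fin d) (1:ℝ)) :
    (∫ y in {y : EuclideanSpace ℝ (Fin d) | ¬ ((x - y) (⟨0, by omega⟩ : Fin d) ≤ 1)},
        ‖y‖ ^ (-(d : ℝ) - α))
      = sigmaConst (d - 1) * α⁻¹ *
          (∫ ρ in Set.Ioi (0:ℝ), ρ ^ ((d : ℝ) - 2) * (1 + ρ ^ 2) ^ (-((d : ℝ) + α) / 2)) *
          (1 - r) ^ (-α) ∧
    fracLapConst d α *
        (∫ y in {y : EuclideanSpace ℝ (Fin d) | ¬ ((x - y) (⟨0, by omega⟩ : Fin d) ≤ 1)},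
            ‖y‖ ^ (-(d : ℝ) - α))
      = (fracLapConst d α * sigmaConst (d - 1) * α⁻¹ *
          (∫ ρ in Set.Ioi (0:ℝ), ρ ^ ((d : ℝ) - 2) * (1 + ρ ^ 2) ^ (-((d : ℝ) + α) / 2))) *
          (1 - r) ^ (-α) := by
  obtain ⟨n, rfl⟩ : ∃ n, d = n + 1 := ⟨d - 1, by omega⟩
  have hn : 1 ≤ n := by omega
  have hsets : {y : EuclideanSpace ℝ (Fin (n+1)) | ¬ ((x - y) (⟨0, by omega⟩ : Fin (n+1)) ≤ 1)}
      = {y : EuclideanSpace ℝ (Fin (n+1)) | y (⟨0, n.succ_pos⟩ : Fin (n+1)) < r - 1} := by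
    subst hx
    ext y
    simp only [Set.mem_setOf_eq, not_le, PiLp.sub_apply, PiLp.smul_apply,
      EuclideanSpace.single_apply, eq_self_iff_true, if_true, smul_eq_mul, mul_one]
    constructor <;> intro h <;> [linarith; linarith]
  have hcast : ((n+1:ℕ):ℝ) = (n:ℝ) + 1 := by push_cast; ring
  have h1 : (∫ y in {y : EuclideanSpace ℝ (Fin (n+1)) |
        ¬ ((x - y) (⟨0, by omega⟩ : Fin (n+1)) ≤ 1)}, ‖y‖ ^ (-((n+1:ℕ) : ℝ) - α))
      = sigmaConst ((n+1) - 1) * α⁻¹ *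
          (∫ ρ in Set.Ioi (0:ℝ), ρ ^ (((n+1:ℕ) : ℝ) - 2) *
            (1 + ρ ^ 2) ^ (-(((n+1:ℕ) : ℝ) + α) / 2)) *
          (1 - r) ^ (-α) := by
    rw [hsets, hcast, Nat.add_sub_cancel,
      show (n:ℝ) + 1 - 2 = (n:ℝ) - 1 by ring]
    exact key_integral n hn α hα r hr
  exact ⟨h1, by rw [h1]; ring⟩
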